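/- For connected graphs G and H of orders m and n respectively, max{m·dem(H), n·dem(G)} ≤ dem(G □ H) ≤ m·dem(H) + n·dem(G) − dem(G)·dem(H). -/

import Mathlib

open SimpleGraph

/-- A set `M` of vertices is a distance-edge-monitoring set of `G`. -/
def demSet {V : Type*} (G : SimpleGraph V) (M : Set V) : Prop :=
  ∀ e ∈ G.edgeSet, ∃ x ∈ M, ∃ y : V, G.dist x y ≠ (G.deleteEdges {e}).dist x y

/-- The distance-edge-monitoring number of `G`. -/
noncomputable def dem {V : Type*} (G : SimpleGraph V) [Fintype V] : ℕ :=
  sInf {k | ∃ M : Finset V, M.card = k ∧ demSet G ↑M}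

namespace DemProof
variable {α β : Type*} {G : SimpleGraph α} {H : SimpleGraph β}

open Classical in
noncomputable def projL : {x y : α × β} → (G □ H).Walk x y → G.Walk x.1 y.1
  | _, _, .nil => .nil
  | x, _, .cons (v := z) h p =>
      if hG : G.Adj x.1 z.1 ∧ x.2 = z.2 then .cons hG.1 (projL p)
      else (projL p).copy (((boxProd_adj.mp h).resolve_left hG).2).symm rfl

open Classical in
noncomputable def projR : {x y : α × β} → (G □ H).Walk x y → H.Walk x.2 y.2
  | _, _, .nil => .nil
  | x, _, .cons (v := z) h p =>
      if hH : H.Adj x.2 z.2 ∧ x.1 = z.1 then .cons hH.1 (projR p)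
      else (projR p).copy (((boxProd_adj.mp h).resolve_right hH).2).symm rfl

lemma proj_mutex {x z : α × β} (h : (G □ H).Adj x z) (hG : G.Adj x.1 z.1 ∧ x.2 = z.2) :
    ¬(H.Adj x.2 z.2 ∧ x.1 = z.1) := fun hH => G.loopless.irrefl _ (hH.2 ▸ hG.1)

lemma projL_length_add {x y : α × β} (w : (G □ H).Walk x y) :
    (projL w).length + (projR w).length = w.length := by
  induction w with
  | nil => rfl
  | cons h p ih =>
    rw [projL, projR]
    rcases boxProd_adj.mp h with hG | hH
    · rw [dif_pos hG, dif_neg (proj_mutex h hG)]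
      simp only [Walk.length_cons, Walk.length_copy]
      omega
    · have hnG : ¬(G.Adj _ _ ∧ _) := fun hG => proj_mutex h hG hH
      rw [dif_neg hnG, dif_pos hH]
      simp only [Walk.length_cons, Walk.length_copy]
      omega

lemma support_fst_of_projL_length_zero {x y : α × β} (w : (G □ H).Walk x y)
    (h0 : (projL w).length = 0) : ∀ p ∈ w.support, p.1 = x.1 := by
  induction w with
  | nil => intro p hp; simp at hp; subst hp; rfl
  | cons h p ih =>
    rw [projL] at h0
    rcases boxProd_adj.mp h with hG | hH
    · rw [dif_pos hG] at h0; simp at h0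
    · have hnG : ¬(G.Adj _ _ ∧ _) := fun hG => proj_mutex h hG hH
      rw [dif_neg hnG, Walk.length_copy] at h0
      intro q hq
      rw [Walk.support_cons] at hq
      rcases List.mem_cons.mp hq with hq | hq
      · subst hq; rfl
      · rw [ih h0 q hq, hH.2]

lemma support_snd_of_projR_length_zero {x y : α × β} (w : (G □ H).Walk x y)
    (h0 : (projR w).length = 0) : ∀ p ∈ w.support, p.2 = x.2 := by
  induction w with
  | nil => intro p hp; simp at hp; subst hp; rfl
  | cons h p ih =>
    rw [projR] at h0
    rcases boxProd_adj.mp h with hG | hH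
    · rw [dif_neg (proj_mutex h hG), Walk.length_copy] at h0
      intro q hq
      rw [Walk.support_cons] at hq
      rcases List.mem_cons.mp hq with hq | hq
      · subst hq; rfl
      · rw [ih h0 q hq, hG.2]
    · rw [dif_pos hH] at h0; simp at h0

lemma projR_edges {x y : α × β} (w : (G □ H).Walk x y) :
    ∀ f ∈ (projR w).edges, ∃ E ∈ w.edges, Sym2.map Prod.snd E = f := by
  induction w with
  | nil => intro f hf; simp [projR] at hf
  | @cons u z yy h p ih =>
    intro f hf
    rw [projR] at hf
    rcases boxProd_adj.mp h with hG | hH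
    · rw [dif_neg (proj_mutex h hG), Walk.edges_copy] at hf
      obtain ⟨E, hE, hEf⟩ := ih f hf
      exact ⟨E, by simp [Walk.edges_cons, hE], hEf⟩
    · rw [dif_pos hH, Walk.edges_cons] at hf
      rcases List.mem_cons.mp hf with hf | hf
      · exact ⟨s(u, z), by simp [Walk.edges_cons], by subst hf; simp [Sym2.map_pair_eq]⟩
      · obtain ⟨E, hE, hEf⟩ := ih f hf
        exact ⟨E, by simp [Walk.edges_cons, hE], hEf⟩

lemma projL_edges {x y : α × β} (w : (G □ H).Walk x y) :
    ∀ f ∈ (projL w).edges, ∃ E ∈ w.edges, Sym2.map Prod.fst E = f := by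
  induction w with
  | nil => intro f hf; simp [projL] at hf
  | @cons u z yy h p ih =>
    intro f hf
    rw [projL] at hf
    rcases boxProd_adj.mp h with hG | hH
    · rw [dif_pos hG, Walk.edges_cons] at hf
      rcases List.mem_cons.mp hf with hf | hf
      · exact ⟨s(u, z), by simp [Walk.edges_cons], by subst hf; simp [Sym2.map_pair_eq]⟩
      · obtain ⟨E, hE, hEf⟩ := ih f hf
        exact ⟨E, by simp [Walk.edges_cons, hE], hEf⟩
    · have hnG : ¬(G.Adj _ _ ∧ _) := fun hG => proj_mutex h hG hH
      rw [dif_neg hnG, Walk.edges_copy] at hf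
      obtain ⟨E, hE, hEf⟩ := ih f hf
      exact ⟨E, by simp [Walk.edges_cons, hE], hEf⟩

lemma edges_boxProdLeft' {a c : α} (b : β) (w : G.Walk a c) :
    (w.boxProdLeft H b).edges = w.edges.map (Sym2.map (G.boxProdLeft H b).toHom) :=
  Walk.edges_map _ _

lemma edges_boxProdRight' {b d : β} (a : α) (w : H.Walk b d) :
    (w.boxProdRight G a).edges = w.edges.map (Sym2.map (G.boxProdRight H a).toHom) :=
  Walk.edges_map _ _

lemma length_boxProdLeft' {a c : α} (b : β) (w : G.Walk a c) :
    (w.boxProdLeft H b).length = w.length := Walk.length_map _ _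

lemma length_boxProdRight' {b d : β} (a : α) (w : H.Walk b d) :
    (w.boxProdRight G a).length = w.length := Walk.length_map _ _

lemma dist_boxProd (hG : G.Connected) (hH : H.Connected) (a c : α) (b d : β) :
    (G □ H).dist (a, b) (c, d) = G.dist a c + H.dist b d := by
  apply le_antisymm
  · obtain ⟨wG, hwG⟩ := hG.exists_walk_length_eq_dist a c
    obtain ⟨wH, hwH⟩ := hH.exists_walk_length_eq_dist b d
    have := SimpleGraph.dist_le ((wG.boxProdLeft H b).append (wH.boxProdRight G c))
    simpa [Walk.length_append, length_boxProdLeft', length_boxProdRight', Walk.length_map,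
      hwG, hwH] using this
  · obtain ⟨w, hw⟩ := (hG.boxProd hH).exists_walk_length_eq_dist (a, b) (c, d)
    calc G.dist a c + H.dist b d ≤ (projL w).length + (projR w).length :=
          add_le_add (SimpleGraph.dist_le _) (SimpleGraph.dist_le _)
      _ = w.length := projL_length_add w
      _ = _ := hw

lemma distDel_eq_of_avoiding_walk {γ : Type*} {P : SimpleGraph γ} {s : Set (Sym2 γ)} {x y : γ}
    (w : P.Walk x y) (hw : w.length = P.dist x y) (hav : ∀ f ∈ w.edges, f ∉ s) :
    (P.deleteEdges s).dist x y = P.dist x y := by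
  have h1 : (P.deleteEdges s).dist x y ≤ P.dist x y := by
    have := SimpleGraph.dist_le (w.toDeleteEdges s hav)
    rwa [Walk.length_transfer, hw] at this
  have h2 : P.dist x y ≤ (P.deleteEdges s).dist x y :=
    Reachable.dist_anti (P.deleteEdges_le s) ⟨w.toDeleteEdges s hav⟩
  omega

lemma distDel_H_edge_off_fiber (hG : G.Connected) (hH : H.Connected)
    {v : α} {w1 w2 : β} (he' : s(w1, w2) ∈ H.edgeSet)
    {a c : α} {b d : β} (hac : a ≠ v ∨ c ≠ v) :
    ((G □ H).deleteEdges {s((v, w1), (v, w2))}).dist (a, b) (c, d) =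
      (G □ H).dist (a, b) (c, d) := by
  obtain ⟨wG, hwG⟩ := hG.exists_walk_length_eq_dist a c
  obtain ⟨wH, hwH⟩ := hH.exists_walk_length_eq_dist b d
  rcases hac with hav | hcv
  · -- do H-moves at level a, then G-moves at level d
    refine distDel_eq_of_avoiding_walk ((wH.boxProdRight G a).append (wG.boxProdLeft H d)) ?_ ?_
    · simp [Walk.length_append, length_boxProdLeft', length_boxProdRight', Walk.length_map,
        hwG, hwH, dist_boxProd hG hH, add_comm]
    · intro f hf hfe
      rw [Set.mem_singleton_iff] at hfe
      subst hfe
      rw [Walk.edges_append, List.mem_append] at hf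
      rcases hf with hf | hf
      · rw [edges_boxProdRight', List.mem_map] at hf
        obtain ⟨g, hg, hgf⟩ := hf
        induction g using Sym2.ind with
        | _ g1 g2 =>
          simp only [Sym2.map_pair_eq, Sym2.eq_iff, Embedding.coe_toHom, boxProdRight_apply,
            Prod.mk.injEq] at hgf
          rcases hgf with ⟨⟨h1, _⟩, _⟩ | ⟨⟨h1, _⟩, _⟩ <;> exact hav h1
      · rw [edges_boxProdLeft', List.mem_map] at hf
        obtain ⟨g, hg, hgf⟩ := hf
        induction g using Sym2.ind with
        | _ g1 g2 =>
          have hne : g1 ≠ g2 := (wG.edges_subset_edgeSet hg).ne -- might need fixing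
          simp only [Sym2.map_pair_eq, Sym2.eq_iff, Embedding.coe_toHom, boxProdLeft_apply,
            Prod.mk.injEq] at hgf
          rcases hgf with ⟨⟨h1, _⟩, ⟨h2, _⟩⟩ | ⟨⟨h1, _⟩, ⟨h2, _⟩⟩ <;> exact hne (h1.trans h2.symm)
  · -- do G-moves at level b, then H-moves at level c
    refine distDel_eq_of_avoiding_walk ((wG.boxProdLeft H b).append (wH.boxProdRight G c)) ?_ ?_
    · simp [Walk.length_append, length_boxProdLeft', length_boxProdRight', Walk.length_map,
        hwG, hwH, dist_boxProd hG hH]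
    · intro f hf hfe
      rw [Set.mem_singleton_iff] at hfe
      subst hfe
      rw [Walk.edges_append, List.mem_append] at hf
      rcases hf with hf | hf
      · rw [edges_boxProdLeft', List.mem_map] at hf
        obtain ⟨g, hg, hgf⟩ := hf
        induction g using Sym2.ind with
        | _ g1 g2 =>
          have hne : g1 ≠ g2 := (wG.edges_subset_edgeSet hg).ne
          simp only [Sym2.map_pair_eq, Sym2.eq_iff, Embedding.coe_toHom, boxProdLeft_apply,
            Prod.mk.injEq] at hgf
          rcases hgf with ⟨⟨h1, _⟩, ⟨h2, _⟩⟩ | ⟨⟨h1, _⟩, ⟨h2, _⟩⟩ <;> exact hne (h1.trans h2.symm)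
      · rw [edges_boxProdRight', List.mem_map] at hf
        obtain ⟨g, hg, hgf⟩ := hf
        induction g using Sym2.ind with
        | _ g1 g2 =>
          simp only [Sym2.map_pair_eq, Sym2.eq_iff, Embedding.coe_toHom, boxProdRight_apply,
            Prod.mk.injEq] at hgf
          rcases hgf with ⟨⟨h1, _⟩, _⟩ | ⟨⟨h1, _⟩, _⟩ <;> exact hcv h1

lemma distDel_H_edge_in_fiber_eq (hG : G.Connected) (hH : H.Connected)
    {v : α} {w1 w2 : β} {b d : β}
    (hsame : (H.deleteEdges {s(w1, w2)}).dist b d = H.dist b d) :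
    ((G □ H).deleteEdges {s((v, w1), (v, w2))}).dist (v, b) (v, d) =
      (G □ H).dist (v, b) (v, d) := by
  by_cases hbd : b = d
  · subst hbd; simp [dist_self]
  · have hne0 : H.dist b d ≠ 0 := (hH.pos_dist_of_ne hbd).ne'
    have hr : (H.deleteEdges {s(w1, w2)}).Reachable b d :=
      Reachable.of_dist_ne_zero (by rw [hsame]; exact hne0)
    obtain ⟨wH, hwH⟩ := hr.exists_walk_length_eq_dist
    have hsub : ∀ f ∈ wH.edges, f ∈ H.edgeSet := fun f hf =>
      ((H.edgeSet_deleteEdges _) ▸ wH.edges_subset_edgeSet hf).1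
    refine distDel_eq_of_avoiding_walk ((wH.transfer H hsub).boxProdRight G v) ?_ ?_
    · rw [length_boxProdRight', Walk.length_transfer, hwH, hsame,
        dist_boxProd hG hH, dist_self, zero_add]
    · intro f hf hfe
      rw [Set.mem_singleton_iff] at hfe
      subst hfe
      rw [edges_boxProdRight', List.mem_map] at hf
      obtain ⟨g, hg, hgf⟩ := hf
      rw [Walk.edges_transfer] at hg
      have hgne : g ≠ s(w1, w2) :=
        ((H.edgeSet_deleteEdges _) ▸ wH.edges_subset_edgeSet hg).2 ∘ Set.mem_singleton_iff.mpr
      induction g using Sym2.ind with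
      | _ g1 g2 =>
        simp only [Sym2.map_pair_eq, Sym2.eq_iff, Embedding.coe_toHom, boxProdRight_apply,
          Prod.mk.injEq] at hgf
        apply hgne
        rw [Sym2.eq_iff]
        rcases hgf with ⟨⟨_, h1⟩, ⟨_, h2⟩⟩ | ⟨⟨_, h1⟩, ⟨_, h2⟩⟩
        · exact Or.inl ⟨h1, h2⟩
        · exact Or.inr ⟨h1, h2⟩

lemma distDel_H_edge_in_fiber_ne (hG : G.Connected) (hH : H.Connected)
    {v : α} {w1 w2 : β} {b d : β}
    (hne : H.dist b d ≠ (H.deleteEdges {s(w1, w2)}).dist b d) :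
    (G □ H).dist (v, b) (v, d) ≠
      ((G □ H).deleteEdges {s((v, w1), (v, w2))}).dist (v, b) (v, d) := by
  have hbd : b ≠ d := by rintro rfl; simp [dist_self] at hne
  have hL0 : H.dist b d ≠ 0 := (hH.pos_dist_of_ne hbd).ne'
  have hPL : (G □ H).dist (v, b) (v, d) = H.dist b d := by
    rw [dist_boxProd hG hH, dist_self, zero_add]
  rw [hPL]
  intro hEq
  have hr : ((G □ H).deleteEdges {s((v, w1), (v, w2))}).Reachable (v, b) (v, d) :=
    Reachable.of_dist_ne_zero (by omega)
  obtain ⟨w, hw⟩ := hr.exists_walk_length_eq_dist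
  have hsub : ∀ f ∈ w.edges, f ∈ (G □ H).edgeSet := fun f hf =>
    (((G □ H).edgeSet_deleteEdges _) ▸ w.edges_subset_edgeSet hf).1
  set w' := w.transfer (G □ H) hsub with hw'def
  have hlen : w'.length = H.dist b d := by
    rw [Walk.length_transfer, hw, ← hEq]
  have hedge : s((v, w1), (v, w2)) ∉ w'.edges := by
    intro hmem
    rw [hw'def, Walk.edges_transfer] at hmem
    exact (((G □ H).edgeSet_deleteEdges _) ▸ w.edges_subset_edgeSet hmem).2 rfl
  have hL2 : H.dist b d ≤ (projR w').length := SimpleGraph.dist_le _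
  have hsum := projL_length_add w'
  have hlenL : (projL w').length = 0 := by omega
  have hlenR : (projR w').length = H.dist b d := by omega
  have hfib := support_fst_of_projL_length_zero w' hlenL
  have hav : ∀ f ∈ (projR w').edges, f ∉ ({s(w1, w2)} : Set (Sym2 β)) := by
    intro f hf hfe
    rw [Set.mem_singleton_iff] at hfe
    subst hfe
    obtain ⟨E, hE, hEf⟩ := projR_edges w' _ hf
    induction E using Sym2.ind with
    | _ p q =>
      have hp1 : p.1 = v := hfib p (Walk.fst_mem_support_of_mem_edges _ hE)
      have hq1 : q.1 = v := hfib q (Walk.snd_mem_support_of_mem_edges _ hE)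
      apply hedge
      have : s(p, q) = s((v, w1), (v, w2)) := by
        rw [Sym2.map_pair_eq, Sym2.eq_iff] at hEf
        rw [Sym2.eq_iff]
        rcases hEf with ⟨h1, h2⟩ | ⟨h1, h2⟩
        · exact Or.inl ⟨Prod.ext hp1 h1, Prod.ext hq1 h2⟩
        · exact Or.inr ⟨Prod.ext hp1 h1, Prod.ext hq1 h2⟩
      exact this ▸ hE
  have h1 : (H.deleteEdges {s(w1, w2)}).dist b d ≤ H.dist b d := by
    have := SimpleGraph.dist_le ((projR w').toDeleteEdges _ hav)
    rwa [Walk.length_transfer, hlenR] at this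
  have h2 : H.dist b d ≤ (H.deleteEdges {s(w1, w2)}).dist b d :=
    Reachable.dist_anti (H.deleteEdges_le _) ⟨(projR w').toDeleteEdges _ hav⟩
  omega

lemma distDel_G_edge_off_fiber (hG : G.Connected) (hH : H.Connected)
    {u : β} {v1 v2 : α} {a c : α} {b d : β} (hbd : b ≠ u ∨ d ≠ u) :
    ((G □ H).deleteEdges {s((v1, u), (v2, u))}).dist (a, b) (c, d) =
      (G □ H).dist (a, b) (c, d) := by
  obtain ⟨wG, hwG⟩ := hG.exists_walk_length_eq_dist a c
  obtain ⟨wH, hwH⟩ := hH.exists_walk_length_eq_dist b d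
  rcases hbd with hbu | hdu
  · -- do G-moves at level b, then H-moves at level c
    refine distDel_eq_of_avoiding_walk ((wG.boxProdLeft H b).append (wH.boxProdRight G c)) ?_ ?_
    · simp [Walk.length_append, length_boxProdLeft', length_boxProdRight', Walk.length_map,
        hwG, hwH, dist_boxProd hG hH]
    · intro f hf hfe
      rw [Set.mem_singleton_iff] at hfe
      subst hfe
      rw [Walk.edges_append, List.mem_append] at hf
      rcases hf with hf | hf
      · rw [edges_boxProdLeft', List.mem_map] at hf
        obtain ⟨g, hg, hgf⟩ := hf
        induction g using Sym2.ind with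
        | _ g1 g2 =>
          simp only [Sym2.map_pair_eq, Sym2.eq_iff, Embedding.coe_toHom, boxProdLeft_apply,
            Prod.mk.injEq] at hgf
          rcases hgf with ⟨⟨_, h1⟩, _⟩ | ⟨⟨_, h1⟩, _⟩ <;> exact hbu h1
      · rw [edges_boxProdRight', List.mem_map] at hf
        obtain ⟨g, hg, hgf⟩ := hf
        induction g using Sym2.ind with
        | _ g1 g2 =>
          have hne : g1 ≠ g2 := (wH.edges_subset_edgeSet hg).ne
          simp only [Sym2.map_pair_eq, Sym2.eq_iff, Embedding.coe_toHom, boxProdRight_apply,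
            Prod.mk.injEq] at hgf
          rcases hgf with ⟨⟨_, h1⟩, ⟨_, h2⟩⟩ | ⟨⟨_, h1⟩, ⟨_, h2⟩⟩ <;> exact hne (h1.trans h2.symm)
  · -- do H-moves at level a, then G-moves at level d
    refine distDel_eq_of_avoiding_walk ((wH.boxProdRight G a).append (wG.boxProdLeft H d)) ?_ ?_
    · simp [Walk.length_append, length_boxProdLeft', length_boxProdRight', Walk.length_map,
        hwG, hwH, dist_boxProd hG hH, add_comm]
    · intro f hf hfe
      rw [Set.mem_singleton_iff] at hfe
      subst hfe
      rw [Walk.edges_append, List.mem_append] at hf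
      rcases hf with hf | hf
      · rw [edges_boxProdRight', List.mem_map] at hf
        obtain ⟨g, hg, hgf⟩ := hf
        induction g using Sym2.ind with
        | _ g1 g2 =>
          have hne : g1 ≠ g2 := (wH.edges_subset_edgeSet hg).ne
          simp only [Sym2.map_pair_eq, Sym2.eq_iff, Embedding.coe_toHom, boxProdRight_apply,
            Prod.mk.injEq] at hgf
          rcases hgf with ⟨⟨_, h1⟩, ⟨_, h2⟩⟩ | ⟨⟨_, h1⟩, ⟨_, h2⟩⟩ <;> exact hne (h1.trans h2.symm)
      · rw [edges_boxProdLeft', List.mem_map] at hf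
        obtain ⟨g, hg, hgf⟩ := hf
        induction g using Sym2.ind with
        | _ g1 g2 =>
          simp only [Sym2.map_pair_eq, Sym2.eq_iff, Embedding.coe_toHom, boxProdLeft_apply,
            Prod.mk.injEq] at hgf
          rcases hgf with ⟨⟨_, h1⟩, _⟩ | ⟨⟨_, h1⟩, _⟩ <;> exact hdu h1

lemma distDel_G_edge_in_fiber_eq (hG : G.Connected) (hH : H.Connected)
    {u : β} {v1 v2 : α} {a c : α}
    (hsame : (G.deleteEdges {s(v1, v2)}).dist a c = G.dist a c) :
    ((G □ H).deleteEdges {s((v1, u), (v2, u))}).dist (a, u) (c, u) =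
      (G □ H).dist (a, u) (c, u) := by
  by_cases hac : a = c
  · subst hac; simp [dist_self]
  · have hne0 : G.dist a c ≠ 0 := (hG.pos_dist_of_ne hac).ne'
    have hr : (G.deleteEdges {s(v1, v2)}).Reachable a c :=
      Reachable.of_dist_ne_zero (by rw [hsame]; exact hne0)
    obtain ⟨wG, hwG⟩ := hr.exists_walk_length_eq_dist
    have hsub : ∀ f ∈ wG.edges, f ∈ G.edgeSet := fun f hf =>
      ((G.edgeSet_deleteEdges _) ▸ wG.edges_subset_edgeSet hf).1
    refine distDel_eq_of_avoiding_walk ((wG.transfer G hsub).boxProdLeft H u) ?_ ?_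
    · rw [length_boxProdLeft', Walk.length_transfer, hwG, hsame,
        dist_boxProd hG hH, dist_self, add_zero]
    · intro f hf hfe
      rw [Set.mem_singleton_iff] at hfe
      subst hfe
      rw [edges_boxProdLeft', List.mem_map] at hf
      obtain ⟨g, hg, hgf⟩ := hf
      rw [Walk.edges_transfer] at hg
      have hgne : g ≠ s(v1, v2) :=
        ((G.edgeSet_deleteEdges _) ▸ wG.edges_subset_edgeSet hg).2 ∘ Set.mem_singleton_iff.mpr
      induction g using Sym2.ind with
      | _ g1 g2 =>
        simp only [Sym2.map_pair_eq, Sym2.eq_iff, Embedding.coe_toHom, boxProdLeft_apply,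
          Prod.mk.injEq] at hgf
        apply hgne
        rw [Sym2.eq_iff]
        rcases hgf with ⟨⟨h1, _⟩, ⟨h2, _⟩⟩ | ⟨⟨h1, _⟩, ⟨h2, _⟩⟩
        · exact Or.inl ⟨h1, h2⟩
        · exact Or.inr ⟨h1, h2⟩

lemma distDel_G_edge_in_fiber_ne (hG : G.Connected) (hH : H.Connected)
    {u : β} {v1 v2 : α} {a c : α}
    (hne : G.dist a c ≠ (G.deleteEdges {s(v1, v2)}).dist a c) :
    (G □ H).dist (a, u) (c, u) ≠
      ((G □ H).deleteEdges {s((v1, u), (v2, u))}).dist (a, u) (c, u) := by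
  have hac : a ≠ c := by rintro rfl; simp [dist_self] at hne
  have hL0 : G.dist a c ≠ 0 := (hG.pos_dist_of_ne hac).ne'
  have hPL : (G □ H).dist (a, u) (c, u) = G.dist a c := by
    rw [dist_boxProd hG hH, dist_self, add_zero]
  rw [hPL]
  intro hEq
  have hr : ((G □ H).deleteEdges {s((v1, u), (v2, u))}).Reachable (a, u) (c, u) :=
    Reachable.of_dist_ne_zero (by omega)
  obtain ⟨w, hw⟩ := hr.exists_walk_length_eq_dist
  have hsub : ∀ f ∈ w.edges, f ∈ (G □ H).edgeSet := fun f hf =>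
    (((G □ H).edgeSet_deleteEdges _) ▸ w.edges_subset_edgeSet hf).1
  set w' := w.transfer (G □ H) hsub with hw'def
  have hlen : w'.length = G.dist a c := by
    rw [Walk.length_transfer, hw, ← hEq]
  have hedge : s((v1, u), (v2, u)) ∉ w'.edges := by
    intro hmem
    rw [hw'def, Walk.edges_transfer] at hmem
    exact (((G □ H).edgeSet_deleteEdges _) ▸ w.edges_subset_edgeSet hmem).2 rfl
  have hL2 : G.dist a c ≤ (projL w').length := SimpleGraph.dist_le _
  have hsum := projL_length_add w'
  have hlenR : (projR w').length = 0 := by omega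
  have hlenL : (projL w').length = G.dist a c := by omega
  have hfib := support_snd_of_projR_length_zero w' hlenR
  have hav : ∀ f ∈ (projL w').edges, f ∉ ({s(v1, v2)} : Set (Sym2 α)) := by
    intro f hf hfe
    rw [Set.mem_singleton_iff] at hfe
    subst hfe
    obtain ⟨E, hE, hEf⟩ := projL_edges w' _ hf
    induction E using Sym2.ind with
    | _ p q =>
      have hp1 : p.2 = u := hfib p (Walk.fst_mem_support_of_mem_edges _ hE)
      have hq1 : q.2 = u := hfib q (Walk.snd_mem_support_of_mem_edges _ hE)
      apply hedge
      have : s(p, q) = s((v1, u), (v2, u)) := by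
        rw [Sym2.map_pair_eq, Sym2.eq_iff] at hEf
        rw [Sym2.eq_iff]
        rcases hEf with ⟨h1, h2⟩ | ⟨h1, h2⟩
        · exact Or.inl ⟨Prod.ext h1 hp1, Prod.ext h2 hq1⟩
        · exact Or.inr ⟨Prod.ext h1 hp1, Prod.ext h2 hq1⟩
      exact this ▸ hE
  have h1 : (G.deleteEdges {s(v1, v2)}).dist a c ≤ G.dist a c := by
    have := SimpleGraph.dist_le ((projL w').toDeleteEdges _ hav)
    rwa [Walk.length_transfer, hlenL] at this
  have h2 : G.dist a c ≤ (G.deleteEdges {s(v1, v2)}).dist a c :=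
    Reachable.dist_anti (G.deleteEdges_le _) ⟨(projL w').toDeleteEdges _ hav⟩
  omega

lemma demSet_univ {γ : Type*} (P : SimpleGraph γ) : demSet P Set.univ := by
  intro e he
  induction e using Sym2.ind with
  | _ p q =>
    refine ⟨p, Set.mem_univ _, q, ?_⟩
    have hadj : P.Adj p q := he
    rw [dist_eq_one_iff_adj.mpr hadj]
    intro h1
    have := dist_eq_one_iff_adj.mp h1.symm
    rw [deleteEdges_adj] at this
    exact this.2 rfl

lemma dem_set_nonempty {γ : Type*} [Fintype γ] (P : SimpleGraph γ) :
    {k | ∃ M : Finset γ, M.card = k ∧ demSet P ↑M}.Nonempty :=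
  ⟨_, Finset.univ, rfl, by rw [Finset.coe_univ]; exact demSet_univ P⟩

lemma dem_spec {γ : Type*} [Fintype γ] (P : SimpleGraph γ) :
    ∃ M : Finset γ, M.card = dem P ∧ demSet P ↑M := Nat.sInf_mem (dem_set_nonempty P)

lemma dem_le_of {γ : Type*} [Fintype γ] {P : SimpleGraph γ} (M : Finset γ)
    (h : demSet P ↑M) : dem P ≤ M.card := Nat.sInf_le ⟨M, rfl, h⟩

lemma le_dem {γ : Type*} [Fintype γ] {P : SimpleGraph γ} (n : ℕ)
    (h : ∀ M : Finset γ, demSet P ↑M → n ≤ M.card) : n ≤ dem P :=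
  le_csInf (dem_set_nonempty P) (by rintro k ⟨M, rfl, hM⟩; exact h M hM)

lemma lower_H [Fintype α] [Fintype β] (hG : G.Connected) (hH : H.Connected)
    (M : Finset (α × β)) (hM : demSet (G □ H) ↑M) :
    Fintype.card α * dem H ≤ M.card := by
  classical
  have key : ∀ v : α, dem H ≤ (M.filter (fun p => p.1 = v)).card := by
    intro v
    have h2 : demSet H ↑((M.filter (fun p => p.1 = v)).image Prod.snd) := by
      intro e' he'
      induction e' using Sym2.ind with
      | _ w1 w2 =>
        have hadj : H.Adj w1 w2 := he'
        have heP : s((v, w1), (v, w2)) ∈ (G □ H).edgeSet := boxProd_adj_right.mpr hadj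
        obtain ⟨x, hxM, y, hxy⟩ := hM _ heP
        obtain ⟨a, b⟩ := x
        obtain ⟨c, d⟩ := y
        have hav : a = v ∧ c = v := by
          by_contra hcon
          rw [not_and_or, ← ne_eq, ← ne_eq] at hcon
          exact hxy (distDel_H_edge_off_fiber hG hH he' hcon).symm
        obtain ⟨h1, h2⟩ := hav
        refine ⟨b, Finset.mem_coe.mpr
            (Finset.mem_image.mpr ⟨(a, b), Finset.mem_filter.mpr ⟨hxM, h1⟩, rfl⟩), d, ?_⟩
        intro heq
        apply hxy
        rw [h1, h2]
        exact (distDel_H_edge_in_fiber_eq hG hH heq.symm).symm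
    calc dem H ≤ ((M.filter (fun p => p.1 = v)).image Prod.snd).card := dem_le_of _ h2
      _ ≤ (M.filter (fun p => p.1 = v)).card := Finset.card_image_le
  calc Fintype.card α * dem H = ∑ _v : α, dem H := by
        rw [Finset.sum_const, Finset.card_univ, smul_eq_mul]
    _ ≤ ∑ v : α, (M.filter (fun p => p.1 = v)).card :=
        Finset.sum_le_sum fun v _ => key v
    _ = M.card := (Finset.card_eq_sum_card_fiberwise (fun x _ => Finset.mem_univ x.1)).symm

lemma lower_G [Fintype α] [Fintype β] (hG : G.Connected) (hH : H.Connected)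
    (M : Finset (α × β)) (hM : demSet (G □ H) ↑M) :
    Fintype.card β * dem G ≤ M.card := by
  classical
  have key : ∀ u : β, dem G ≤ (M.filter (fun p => p.2 = u)).card := by
    intro u
    have h2 : demSet G ↑((M.filter (fun p => p.2 = u)).image Prod.fst) := by
      intro e' he'
      induction e' using Sym2.ind with
      | _ v1 v2 =>
        have hadj : G.Adj v1 v2 := he'
        have heP : s((v1, u), (v2, u)) ∈ (G □ H).edgeSet := boxProd_adj_left.mpr hadj
        obtain ⟨x, hxM, y, hxy⟩ := hM _ heP
        obtain ⟨a, b⟩ := x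
        obtain ⟨c, d⟩ := y
        have hav : b = u ∧ d = u := by
          by_contra hcon
          rw [not_and_or, ← ne_eq, ← ne_eq] at hcon
          exact hxy (distDel_G_edge_off_fiber hG hH hcon).symm
        obtain ⟨h1, h2⟩ := hav
        refine ⟨a, Finset.mem_coe.mpr
            (Finset.mem_image.mpr ⟨(a, b), Finset.mem_filter.mpr ⟨hxM, h1⟩, rfl⟩), c, ?_⟩
        intro heq
        apply hxy
        rw [h1, h2]
        exact (distDel_G_edge_in_fiber_eq hG hH heq.symm).symm
    calc dem G ≤ ((M.filter (fun p => p.2 = u)).image Prod.fst).card := dem_le_of _ h2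
      _ ≤ (M.filter (fun p => p.2 = u)).card := Finset.card_image_le
  calc Fintype.card β * dem G = ∑ _u : β, dem G := by
        rw [Finset.sum_const, Finset.card_univ, smul_eq_mul]
    _ ≤ ∑ u : β, (M.filter (fun p => p.2 = u)).card :=
        Finset.sum_le_sum fun u _ => key u
    _ = M.card := (Finset.card_eq_sum_card_fiberwise (fun x _ => Finset.mem_univ x.2)).symm

lemma upper_demSet [DecidableEq α] [DecidableEq β] [Fintype α] [Fintype β]
    (hG : G.Connected) (hH : H.Connected)
    {MG : Finset α} {MH : Finset β} (hMG : demSet G ↑MG) (hMH : demSet H ↑MH) :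
    demSet (G □ H) ↑((MG ×ˢ Finset.univ) ∪ (Finset.univ ×ˢ MH)) := by
  intro e he
  induction e using Sym2.ind with
  | _ x y =>
    have hadj : (G □ H).Adj x y := he
    obtain ⟨a, b⟩ := x
    obtain ⟨c, d⟩ := y
    rcases boxProd_adj.mp hadj with ⟨hGadj, heq⟩ | ⟨hHadj, heq⟩
    · dsimp only at hGadj heq
      obtain ⟨a', haM, c', hdist⟩ := hMG s(a, c) hGadj
      refine ⟨(a', b), ?_, (c', b), ?_⟩
      · exact Finset.mem_coe.mpr (Finset.mem_union_left _
          (Finset.mem_product.mpr ⟨Finset.mem_coe.mp haM, Finset.mem_univ _⟩))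
      · rw [← heq]
        exact distDel_G_edge_in_fiber_ne hG hH hdist
    · dsimp only at hHadj heq
      obtain ⟨b', hbM, d', hdist⟩ := hMH s(b, d) hHadj
      refine ⟨(a, b'), ?_, (a, d'), ?_⟩
      · exact Finset.mem_coe.mpr (Finset.mem_union_right _
          (Finset.mem_product.mpr ⟨Finset.mem_univ _, Finset.mem_coe.mp hbM⟩))
      · rw [← heq]
        exact distDel_H_edge_in_fiber_ne hG hH hdist

end DemProof

theorem stmt_13 {V W : Type*} [Fintype V] [Fintype W]
    (G : SimpleGraph V) (H : SimpleGraph W) (hG : G.Connected) (hH : H.Connected) :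
    max (Fintype.card V * dem H) (Fintype.card W * dem G) ≤ dem (G □ H) ∧
    dem (G □ H) ≤
      Fintype.card V * dem H + Fintype.card W * dem G - dem G * dem H := by
  classical
  constructor
  · apply max_le
    · exact DemProof.le_dem _ fun M hM => DemProof.lower_H hG hH M hM
    · exact DemProof.le_dem _ fun M hM => DemProof.lower_G hG hH M hM
  · obtain ⟨MG, hMGcard, hMG⟩ := DemProof.dem_spec G
    obtain ⟨MH, hMHcard, hMH⟩ := DemProof.dem_spec H
    have hle := DemProof.dem_le_of _ (DemProof.upper_demSet hG hH hMG hMH)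
    have hint : (MG ×ˢ (Finset.univ : Finset W)) ∩ ((Finset.univ : Finset V) ×ˢ MH)
        = MG ×ˢ MH := by
      ext ⟨p, q⟩
      simp [Finset.mem_product, and_comm]
    have hcard := Finset.card_union_add_card_inter (MG ×ˢ (Finset.univ : Finset W))
      ((Finset.univ : Finset V) ×ˢ MH)
    rw [hint] at hcard
    simp only [Finset.card_product, Finset.card_univ, hMGcard, hMHcard] at hcard
    apply Nat.le_sub_of_add_le
    calc dem (G □ H) + dem G * dem H
        ≤ ((MG ×ˢ Finset.univ) ∪ (Finset.univ ×ˢ MH)).card + dem G * dem H := by omega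
      _ = dem G * Fintype.card W + Fintype.card V * dem H := hcard
      _ = Fintype.card V * dem H + Fintype.card W * dem G := by ring
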